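/- Let V ⊆ ℝⁿ be a C¹ submanifold, g : ℝⁿ → ℝ a C¹ function whose restriction to V has no critical points on V \ {0}, and f : ℝⁿ → ℝ another C¹ function with f(0) = 0. Let γ : [0, ν) → ℝⁿ be a C¹ curve with γ(0) = 0, γ((0,ν)) ⊆ V, g(γ(t)) = 0 for all t, γ'(t) tangent to V at γ(t), and suppose for each t ∈ (0,ν) the tangential gradients ∇f|_V(γ(t)) and ∇g|_V(γ(t)) are linearly dependent. Then f(γ(t)) = 0 for all t ∈ [0, ν). -/

import Mathlib

open scoped RealInnerProductSpace

/-- Key derivative computation: for h C¹, (h ∘ γ)'(t) = ⟪∇h(γ t), γ'(t)⟫, and if γ'(t) ∈ T,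
this equals the inner product with the projected gradient. -/
lemma proj_inner_eq {n : ℕ} (K : Submodule ℝ (EuclideanSpace ℝ (Fin n)))
    (w v : EuclideanSpace ℝ (Fin n)) (hv : v ∈ K) :
    ⟪(Submodule.orthogonalProjectionOnto K w : EuclideanSpace ℝ (Fin n)), v⟫ = ⟪w, v⟫ := by
  have h := Submodule.starProjection_inner_eq_zero (K := K) w v hv
  rw [inner_sub_left] at h
  rw [Submodule.coe_orthogonalProjectionOnto_apply]
  linarith [h]

theorem stmt9 {n : ℕ} (V : Set (EuclideanSpace ℝ (Fin n)))
    (f g : EuclideanSpace ℝ (Fin n) → ℝ)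
    (hf : ContDiff ℝ 1 f) (hg : ContDiff ℝ 1 g) (hf0 : f 0 = 0)
    (T : EuclideanSpace ℝ (Fin n) → Submodule ℝ (EuclideanSpace ℝ (Fin n)))
    (hnocrit : ∀ p ∈ V, p ≠ 0 →
      (Submodule.orthogonalProjectionOnto (T p) (gradient g p) : EuclideanSpace ℝ (Fin n)) ≠ 0)
    (ν : ℝ) (hν : 0 < ν) (γ : ℝ → EuclideanSpace ℝ (Fin n))
    (hγ0 : γ 0 = 0)
    (hγdiff : ∀ t ∈ Set.Ico (0:ℝ) ν, DifferentiableAt ℝ γ t)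
    (hγV : ∀ t ∈ Set.Ioo (0:ℝ) ν, γ t ∈ V)
    (hγne : ∀ t ∈ Set.Ioo (0:ℝ) ν, γ t ≠ 0)
    (hgγ : ∀ t ∈ Set.Ico (0:ℝ) ν, g (γ t) = 0)
    (hγtan : ∀ t ∈ Set.Ioo (0:ℝ) ν, deriv γ t ∈ T (γ t))
    (hdep : ∀ t ∈ Set.Ioo (0:ℝ) ν, ∃ a b : ℝ, (a, b) ≠ (0, 0) ∧
      a • (Submodule.orthogonalProjectionOnto (T (γ t)) (gradient f (γ t)) : EuclideanSpace ℝ (Fin n)) +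
        b • (Submodule.orthogonalProjectionOnto (T (γ t)) (gradient g (γ t)) : EuclideanSpace ℝ (Fin n)) = 0) :
    ∀ t ∈ Set.Ico (0:ℝ) ν, f (γ t) = 0 := by
  -- derivative of h ∘ γ at t is ⟪∇h(γ t), γ'(t)⟫
  have hchain : ∀ (h : EuclideanSpace ℝ (Fin n) → ℝ), ContDiff ℝ 1 h →
      ∀ t ∈ Set.Ico (0:ℝ) ν, HasDerivAt (h ∘ γ) ⟪gradient h (γ t), deriv γ t⟫ t := by
    intro h hh t ht
    have hγ' : HasDerivAt γ (deriv γ t) t := (hγdiff t ht).hasDerivAt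
    have hgr : HasGradientAt h (gradient h (γ t)) (γ t) :=
      (hh.differentiable one_ne_zero (γ t)).hasGradientAt
    have := hgr.hasFDerivAt.comp_hasDerivAt t hγ'
    simpa using this
  -- derivative of g ∘ γ vanishes on (0, ν)
  have hgderiv : ∀ t ∈ Set.Ioo (0:ℝ) ν, ⟪gradient g (γ t), deriv γ t⟫ = 0 := by
    intro t ht
    have hd := hchain g hg t ⟨ht.1.le, ht.2⟩
    have heq : (g ∘ γ) =ᶠ[nhds t] fun _ => 0 := by
      filter_upwards [Ioo_mem_nhds ht.1 ht.2] with s hs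
      exact hgγ s ⟨hs.1.le, hs.2⟩
    have : HasDerivAt (fun _ : ℝ => (0:ℝ)) ⟪gradient g (γ t), deriv γ t⟫ t :=
      hd.congr_of_eventuallyEq heq.symm
    have h0 : deriv (fun _ : ℝ => (0:ℝ)) t = ⟪gradient g (γ t), deriv γ t⟫ := this.deriv
    simpa using h0.symm
  -- derivative of f ∘ γ vanishes on (0, ν)
  have hfderiv : ∀ t ∈ Set.Ioo (0:ℝ) ν, HasDerivAt (f ∘ γ) 0 t := by
    intro t ht
    have hd := hchain f hf t ⟨ht.1.le, ht.2⟩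
    have htan := hγtan t ht
    have hginner : ⟪(Submodule.orthogonalProjectionOnto (T (γ t)) (gradient g (γ t)) :
        EuclideanSpace ℝ (Fin n)), deriv γ t⟫ = 0 := by
      rw [proj_inner_eq _ _ _ htan]; exact hgderiv t ht
    obtain ⟨a, b, hab, hsum⟩ := hdep t ht
    have ha : a ≠ 0 := by
      intro ha0
      have hb : b ≠ 0 := by
        intro hb0; exact hab (by simp [ha0, hb0])
      rw [ha0, zero_smul, zero_add] at hsum
      have := hnocrit (γ t) (hγV t ht) (hγne t ht)
      exact this (by simpa [hb] using smul_eq_zero.mp hsum |>.resolve_left hb)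
    -- inner product of the dependence relation with γ'(t)
    have hsum' := congrArg (fun w => ⟪w, deriv γ t⟫) hsum
    simp only [inner_add_left, inner_smul_left, RCLike.star_def, conj_trivial,
      inner_zero_left] at hsum'
    rw [hginner, mul_zero, add_zero] at hsum'
    have hfinner : ⟪gradient f (γ t), deriv γ t⟫ = 0 := by
      rw [← proj_inner_eq (T (γ t)) _ _ htan]
      rcases mul_eq_zero.mp hsum' with h | h
      · exact absurd h ha
      · exact h
    rw [hfinner] at hd
    exact hd
  -- conclude
  intro t ht
  rcases eq_or_lt_of_le ht.1 with h0 | h0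
  · rw [← h0, hγ0, hf0]
  -- f ∘ γ is constant on (0, t]
  have hconst : ∀ s ∈ Set.Ioo (0:ℝ) t, (f ∘ γ) t = (f ∘ γ) s := by
    intro s hs
    have hsub : Set.Icc s t ⊆ Set.Ioo 0 ν := fun x hx =>
      ⟨lt_of_lt_of_le hs.1 hx.1, lt_of_le_of_lt hx.2 ht.2⟩
    have hcont : ContinuousOn (f ∘ γ) (Set.Icc s t) := fun x hx =>
      ((hfderiv x (hsub hx)).continuousAt).continuousWithinAt
    have := constant_of_has_deriv_right_zero hcont
      (fun x hx => ((hfderiv x (hsub ⟨hx.1, hx.2.le⟩)).hasDerivWithinAt))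
      t (Set.right_mem_Icc.mpr hs.2.le)
    exact this
  -- continuity at 0 from the right gives the value
  have hcont0 : ContinuousAt (f ∘ γ) 0 :=
    (hf.continuous.continuousAt).comp (hγdiff 0 ⟨le_refl 0, hν⟩).continuousAt
  have htend : Filter.Tendsto (f ∘ γ) (nhdsWithin 0 (Set.Ioi 0)) (nhds ((f ∘ γ) 0)) :=
    hcont0.continuousWithinAt.tendsto
  have heq : (f ∘ γ) =ᶠ[nhdsWithin 0 (Set.Ioi 0)] fun _ => (f ∘ γ) t := by
    filter_upwards [Ioo_mem_nhdsGT_of_mem (Set.mem_Ico.mpr ⟨le_refl 0, h0⟩)] with s hs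
    exact (hconst s hs).symm
  have htend' : Filter.Tendsto (f ∘ γ) (nhdsWithin 0 (Set.Ioi 0)) (nhds ((f ∘ γ) t)) :=
    Filter.Tendsto.congr' heq.symm tendsto_const_nhds
  have := tendsto_nhds_unique htend htend'
  simp only [Function.comp_apply, hγ0, hf0] at this
  exact this.symm
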